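/- The last vertex added in a reverse perfect elimination construction is simplicial: if σ = [v_1, ..., v_n] is a perfect elimination order of a chordal graph G, then the neighborhood of v_1 in G is a complete subgraph (v_1 is simplicial in G). Moreover, every chordal graph with at least one vertex has a simplicial vertex. -/

import Mathlib

open SimpleGraph

/-- A graph is chordal if every cycle of length ≥ 4 has a chord. -/
def IsChordal {V : Type*} (G : SimpleGraph V) : Prop :=
  ∀ (v : V) (w : G.Walk v v), w.IsCycle → 4 ≤ w.length →
    ∃ a b, a ∈ w.support ∧ b ∈ w.support ∧ G.Adj a b ∧ s(a, b) ∉ w.edges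

/-- `σ` is a perfect elimination order of `G` if for every vertex `σ i`, its
neighbours among the later vertices `σ j`, `j > i`, form a complete subgraph. -/
def IsPEO {V : Type*} (G : SimpleGraph V) {n : ℕ} (σ : Fin n ≃ V) : Prop :=
  ∀ i : Fin n, G.IsClique {u | G.Adj (σ i) u ∧ ∃ j, i < j ∧ σ j = u}

namespace ChordalAux

variable {V : Type*} {G : SimpleGraph V}

/-- Reachability inside a set of allowed vertices. -/
def RIn (G : SimpleGraph V) (T : Set V) (a b : V) : Prop :=
  ∃ w : G.Walk a b, ∀ z ∈ w.support, z ∈ T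

/-- `v` is simplicial inside `s`. -/
def SimpIn (G : SimpleGraph V) (s : Set V) (v : V) : Prop :=
  ∀ ⦃x⦄, x ∈ s → G.Adj v x → ∀ ⦃y⦄, y ∈ s → G.Adj v y → x ≠ y → G.Adj x y

lemma RIn.refl {T : Set V} {a : V} (h : a ∈ T) : RIn G T a a :=
  ⟨Walk.nil, by simp [h]⟩

lemma RIn.symm {T : Set V} {a b : V} (h : RIn G T a b) : RIn G T b a := by
  obtain ⟨w, hw⟩ := h
  exact ⟨w.reverse, fun z hz => hw z (by simpa [Walk.support_reverse] using hz)⟩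

lemma RIn.trans {T : Set V} {a b c : V} (h1 : RIn G T a b) (h2 : RIn G T b c) :
    RIn G T a c := by
  obtain ⟨w1, hw1⟩ := h1
  obtain ⟨w2, hw2⟩ := h2
  refine ⟨w1.append w2, fun z hz => ?_⟩
  rcases (Walk.mem_support_append_iff _ _).1 hz with h | h
  · exact hw1 z h
  · exact hw2 z h

lemma RIn.single {T : Set V} {a b : V} (h : G.Adj a b) (ha : a ∈ T) (hb : b ∈ T) :
    RIn G T a b :=
  ⟨Walk.cons h Walk.nil, by simp [ha, hb]⟩

lemma RIn.of_support [DecidableEq V] {T : Set V} {a b z : V} {w : G.Walk a b}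
    (hw : ∀ z ∈ w.support, z ∈ T) (hz : z ∈ w.support) : RIn G T a z :=
  ⟨w.takeUntil z hz, fun m hm => hw m (Walk.support_takeUntil_subset _ hz hm)⟩

lemma edge_of_length_one {u v : V} (p : G.Walk u v) (h : p.length = 1) :
    s(u, v) ∈ p.edges := by
  cases p with
  | nil => simp at h
  | cons h' p' =>
    cases p' with
    | nil => simp
    | cons h'' p'' => simp [Walk.length_cons] at h

lemma exists_min_walk {T : Set V} {x y : V}
    (h : ∃ w : G.Walk x y, ∀ z ∈ w.support, z ∈ T) :
    ∃ w : G.Walk x y, (∀ z ∈ w.support, z ∈ T) ∧ w.IsPath ∧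
      ∀ w' : G.Walk x y, (∀ z ∈ w'.support, z ∈ T) → w.length ≤ w'.length := by
  classical
  set L : Set ℕ := {m | ∃ w : G.Walk x y, (∀ z ∈ w.support, z ∈ T) ∧ w.length = m} with hL
  have hLne : L.Nonempty := ⟨h.choose.length, h.choose, h.choose_spec, rfl⟩
  obtain ⟨w0, hw0, hw0len⟩ := Nat.sInf_mem hLne
  refine ⟨w0.bypass, fun z hz => hw0 z (w0.support_bypass_subset hz), w0.bypass_isPath, ?_⟩
  intro w' hw'
  have h1 : w0.bypass.length ≤ w0.length := w0.length_bypass_le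
  have h2 : sInf L ≤ w'.length := Nat.sInf_le ⟨w', hw', rfl⟩
  omega

lemma shortcut [DecidableEq V] {T : Set V} {x y : V} {w : G.Walk x y}
    (hT : ∀ z ∈ w.support, z ∈ T)
    (hmin : ∀ w' : G.Walk x y, (∀ z ∈ w'.support, z ∈ T) → w.length ≤ w'.length)
    {u v : V} (hu : u ∈ w.support) (hv : v ∈ w.support) (huv : G.Adj u v) :
    s(u, v) ∈ w.edges := by
  classical
  by_contra hne
  have hsplit := w.take_spec hv
  have hlen : (w.takeUntil v hv).length + (w.dropUntil v hv).length = w.length := by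
    rw [← Walk.length_append, hsplit]
  have hu' : u ∈ (w.takeUntil v hv).support ∨ u ∈ (w.dropUntil v hv).support := by
    have := hu
    rw [← hsplit, Walk.mem_support_append_iff] at this
    exact this
  rcases hu' with huP | huQ
  · set p := w.takeUntil v hv with hp
    have hp1 := p.take_spec huP
    have hplen : (p.takeUntil u huP).length + (p.dropUntil u huP).length = p.length := by
      rw [← Walk.length_append, hp1]
    have hp2 : 2 ≤ (p.dropUntil u huP).length := by
      rcases Nat.lt_or_ge (p.dropUntil u huP).length 2 with h2 | h2
      · have : (p.dropUntil u huP).length = 0 ∨ (p.dropUntil u huP).length = 1 := by omega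
        rcases this with h0 | h1
        · exact absurd (Walk.eq_of_length_eq_zero h0) huv.ne
        · exact absurd (Walk.edges_takeUntil_subset w hv
            (Walk.edges_dropUntil_subset p huP (edge_of_length_one _ h1))) hne
      · exact h2
    have hW := hmin ((p.takeUntil u huP).append (Walk.cons huv (w.dropUntil v hv))) ?_
    · rw [Walk.length_append, Walk.length_cons] at hW
      omega
    · intro z hz
      rcases (Walk.mem_support_append_iff _ _).1 hz with h | h
      · exact hT z (Walk.support_takeUntil_subset w hv
          (Walk.support_takeUntil_subset p huP h))
      · rw [Walk.support_cons] at h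
        rcases List.mem_cons.1 h with h | h
        · subst h; exact hT _ hu
        · exact hT z (Walk.support_dropUntil_subset w hv h)
  · set q := w.dropUntil v hv with hq
    have hq1 := q.take_spec huQ
    have hqlen : (q.takeUntil u huQ).length + (q.dropUntil u huQ).length = q.length := by
      rw [← Walk.length_append, hq1]
    have hq2 : 2 ≤ (q.takeUntil u huQ).length := by
      rcases Nat.lt_or_ge (q.takeUntil u huQ).length 2 with h2 | h2
      · have : (q.takeUntil u huQ).length = 0 ∨ (q.takeUntil u huQ).length = 1 := by omega
        rcases this with h0 | h1
        · exact absurd (Walk.eq_of_length_eq_zero h0) huv.ne'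
        · have : s(v, u) ∈ w.edges := Walk.edges_dropUntil_subset w hv
            (Walk.edges_takeUntil_subset q huQ (edge_of_length_one _ h1))
          rw [Sym2.eq_swap] at this
          exact absurd this hne
      · exact h2
    have hW := hmin ((w.takeUntil v hv).append (Walk.cons huv.symm (q.dropUntil u huQ))) ?_
    · rw [Walk.length_append, Walk.length_cons] at hW
      omega
    · intro z hz
      rcases (Walk.mem_support_append_iff _ _).1 hz with h | h
      · exact hT z (Walk.support_takeUntil_subset w hv h)
      · rw [Walk.support_cons] at h
        rcases List.mem_cons.1 h with h | h
        · subst h; exact hT _ hv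
        · exact hT z (Walk.support_dropUntil_subset w hv
            (Walk.support_dropUntil_subset q huQ h))

lemma last_nbr [DecidableEq V] {c t : V} (w : G.Walk c t) (h1 : w.support.count t = 1) (hct : c ≠ t) :
    ∃ z, G.Adj t z ∧ ∃ w' : G.Walk c z, ∀ x ∈ w'.support, x ∈ w.support ∧ x ≠ t := by
  classical
  have hnil : ¬ w.reverse.Nil := Walk.not_nil_of_ne (Ne.symm hct)
  refine ⟨w.reverse.getVert 1, w.reverse.adj_snd hnil, w.reverse.tail.reverse, ?_⟩
  intro x hx
  have hx' : x ∈ w.reverse.support.tail := by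
    have := hx
    rw [Walk.support_reverse] at this
    rw [← Walk.support_tail_of_not_nil _ hnil]
    exact List.mem_reverse.1 this
  have htail : w.reverse.support = t :: w.reverse.support.tail := Walk.support_eq_cons _
  have hcount : w.reverse.support.count t = 1 := by
    rw [Walk.support_reverse, List.count_reverse]
    exact h1
  have htnot : t ∉ w.reverse.support.tail := by
    intro hmem
    rw [htail, List.count_cons_self] at hcount
    have := List.count_pos_iff.2 hmem
    omega
  constructor
  · have : x ∈ w.reverse.support := List.mem_of_mem_tail hx'
    rw [Walk.support_reverse, List.mem_reverse] at this
    exact this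
  · exact fun h => htnot (h ▸ hx')

theorem key (G : SimpleGraph V) (hG : IsChordal G) :
    ∀ (n : ℕ) (s : Finset V), s.card = n → s.Nonempty →
      (∃ v ∈ s, SimpIn G ↑s v) ∧
      ((∃ a ∈ s, ∃ b ∈ s, a ≠ b ∧ ¬G.Adj a b) →
        ∃ u ∈ s, ∃ v ∈ s, SimpIn G ↑s u ∧ SimpIn G ↑s v ∧ u ≠ v ∧ ¬G.Adj u v) := by
  intro n
  induction n using Nat.strong_induction_on with
  | _ n ih =>
  intro s hcard hne
  classical
  by_cases hcomp : ∀ x ∈ s, ∀ y ∈ s, x ≠ y → G.Adj x y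
  · obtain ⟨v, hv⟩ := hne
    refine ⟨⟨v, hv, fun x hx hax y hy hay hxy => hcomp x hx y hy hxy⟩, ?_⟩
    rintro ⟨a, ha, b, hb, hab, hnadj⟩
    exact absurd (hcomp a ha b hb hab) hnadj
  · push_neg at hcomp
    obtain ⟨a, ha, b, hb, hab, hnadj⟩ := hcomp
    -- the trivial separator
    have hsep0 : (s \ {a, b}) ∈ (s.powerset).filter
        (fun T : Finset V => a ∉ T ∧ b ∉ T ∧ ¬ RIn G ((↑s : Set V) \ ↑T) a b) := by
      rw [Finset.mem_filter, Finset.mem_powerset]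
      refine ⟨Finset.sdiff_subset, by simp, by simp, ?_⟩
      rintro ⟨w, hw⟩
      cases w with
      | nil => exact hab rfl
      | cons h p =>
        rename_i c
        have hc := hw c (by rw [Walk.support_cons]; exact List.mem_cons_of_mem _ p.start_mem_support)
        rw [Set.mem_diff] at hc
        have hcab : c = a ∨ c = b := by
          have h1 : c ∈ s := Finset.mem_coe.1 hc.1
          have h2 : c ∉ (s \ ({a, b} : Finset V)) := fun hm => hc.2 (Finset.mem_coe.2 hm)
          by_contra hor
          push_neg at hor
          exact h2 (Finset.mem_sdiff.2 ⟨h1, by simp [hor.1, hor.2]⟩)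
        rcases hcab with rfl | rfl
        · exact G.irrefl h
        · exact hnadj h
    -- a minimum-size separator S
    obtain ⟨S, hSmem, hSmin⟩ := Finset.exists_min_image
      ((s.powerset).filter (fun T : Finset V => a ∉ T ∧ b ∉ T ∧ ¬ RIn G ((↑s : Set V) \ ↑T) a b))
      Finset.card ⟨_, hsep0⟩
    rw [Finset.mem_filter, Finset.mem_powerset] at hSmem
    obtain ⟨hSs, haS, hbS, hSsep⟩ := hSmem
    set D : Set V := (↑s : Set V) \ ↑S with hD
    have hDmem : ∀ x, x ∈ D ↔ x ∈ s ∧ x ∉ S := by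
      intro x; rw [hD]; simp [Set.mem_diff]
    set A : Finset V := s.filter (fun x => x ∉ S ∧ RIn G D a x) with hA
    set B : Finset V := s.filter (fun x => x ∉ S ∧ RIn G D b x) with hB
    have hmemA : ∀ x, x ∈ A ↔ x ∈ s ∧ x ∉ S ∧ RIn G D a x := by
      intro x; rw [hA, Finset.mem_filter]
    have hmemB : ∀ x, x ∈ B ↔ x ∈ s ∧ x ∉ S ∧ RIn G D b x := by
      intro x; rw [hB, Finset.mem_filter]
    have haA : a ∈ A := (hmemA a).2 ⟨ha, haS, RIn.refl ((hDmem a).2 ⟨ha, haS⟩)⟩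
    have hbB : b ∈ B := (hmemB b).2 ⟨hb, hbS, RIn.refl ((hDmem b).2 ⟨hb, hbS⟩)⟩
    have hAB : ∀ x, x ∈ A → x ∉ B := by
      intro x hx hxB
      exact hSsep ((((hmemA x).1 hx).2.2).trans (((hmemB x).1 hxB).2.2).symm)
    have hclosedA : ∀ x, x ∈ A → ∀ z, z ∈ s → z ∉ S → G.Adj x z → z ∈ A := by
      intro x hx z hz hzS hadj
      obtain ⟨hxs, hxS, hax⟩ := (hmemA x).1 hx
      exact (hmemA z).2 ⟨hz, hzS, hax.trans (RIn.single hadj ((hDmem x).2 ⟨hxs, hxS⟩)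
        ((hDmem z).2 ⟨hz, hzS⟩))⟩
    have hclosedB : ∀ x, x ∈ B → ∀ z, z ∈ s → z ∉ S → G.Adj x z → z ∈ B := by
      intro x hx z hz hzS hadj
      obtain ⟨hxs, hxS, hbx⟩ := (hmemB x).1 hx
      exact (hmemB z).2 ⟨hz, hzS, hbx.trans (RIn.single hadj ((hDmem x).2 ⟨hxs, hxS⟩)
        ((hDmem z).2 ⟨hz, hzS⟩))⟩
    have hnoedge : ∀ x, x ∈ A → ∀ z, z ∈ B → ¬ G.Adj x z := by
      intro x hx z hz hadj
      obtain ⟨hzs, hzS, _⟩ := (hmemB z).1 hz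
      exact hAB z (hclosedA x hx z hzs hzS hadj) hz
    -- every separator vertex has neighbours in both A and B
    have hnbr : ∀ t ∈ S, (∃ z ∈ A, G.Adj t z) ∧ (∃ z ∈ B, G.Adj t z) := by
      intro t ht
      have hcardlt : (S.erase t).card < S.card := Finset.card_erase_lt_of_mem ht
      have haE : a ∉ S.erase t := fun h => haS (Finset.mem_of_mem_erase h)
      have hbE : b ∉ S.erase t := fun h => hbS (Finset.mem_of_mem_erase h)
      have hR : RIn G ((↑s : Set V) \ ↑(S.erase t)) a b := by
        by_contra hR
        have := hSmin (S.erase t) (Finset.mem_filter.2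
          ⟨Finset.mem_powerset.2 ((S.erase_subset t).trans hSs), haE, hbE, hR⟩)
        omega
      obtain ⟨w, hw⟩ := hR
      have htw : t ∈ w.support := by
        by_contra htw
        refine hSsep ⟨w, fun z hz => ?_⟩
        have hz' := hw z hz
        rw [Set.mem_diff] at hz'
        refine (hDmem z).2 ⟨Finset.mem_coe.1 hz'.1, fun hzS => ?_⟩
        have hzt : z = t := by
          by_contra hne
          exact hz'.2 (Finset.mem_coe.2 (Finset.mem_erase.2 ⟨hne, hzS⟩))
        exact htw (hzt ▸ hz)
      have side : ∀ (c d : V) (wk : G.Walk c d),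
          (∀ z ∈ wk.support, z ∈ (↑s : Set V) \ ↑(S.erase t)) →
          c ∉ S → t ∈ wk.support → ∃ z, z ∈ s ∧ z ∉ S ∧ RIn G D c z ∧ G.Adj t z := by
        intro c d wk hwk hcS htwk
        have hct : c ≠ t := fun h => hcS (h ▸ ht)
        obtain ⟨z, hzadj, w', hw'⟩ := last_nbr (wk.takeUntil t htwk)
          (Walk.count_support_takeUntil_eq_one wk htwk) hct
        have hzsub : ∀ x ∈ w'.support, x ∈ D := by
          intro x hx
          obtain ⟨hx1, hx2⟩ := hw' x hx
          have hx3 := hwk x (Walk.support_takeUntil_subset wk htwk hx1)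
          rw [Set.mem_diff] at hx3
          exact (hDmem x).2 ⟨Finset.mem_coe.1 hx3.1, fun hxS =>
            hx3.2 (Finset.mem_coe.2 (Finset.mem_erase.2 ⟨hx2, hxS⟩))⟩
        obtain ⟨hzs, hzS⟩ := (hDmem z).1 (hzsub z w'.end_mem_support)
        exact ⟨z, hzs, hzS, ⟨w', hzsub⟩, hzadj⟩
      constructor
      · obtain ⟨z, hzs, hzS, hzR, hzadj⟩ := side a b w hw haS htw
        exact ⟨z, (hmemA z).2 ⟨hzs, hzS, hzR⟩, hzadj⟩
      · obtain ⟨z, hzs, hzS, hzR, hzadj⟩ := side b a w.reverse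
          (fun z hz => hw z (by rwa [Walk.support_reverse, List.mem_reverse] at hz)) hbS
          (by rwa [Walk.support_reverse, List.mem_reverse])
        exact ⟨z, (hmemB z).2 ⟨hzs, hzS, hzR⟩, hzadj⟩
    -- walks between members of A stay in A; same for B
    have hAconn : ∀ u, u ∈ A → ∀ v, v ∈ A →
        ∃ w : G.Walk u v, ∀ z ∈ w.support, z ∈ (↑A : Set V) := by
      intro u hu v hv
      obtain ⟨w1, hw1⟩ := (((hmemA u).1 hu).2.2).symm
      obtain ⟨w2, hw2⟩ := ((hmemA v).1 hv).2.2
      refine ⟨w1.append w2, fun z hz => ?_⟩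
      rcases (Walk.mem_support_append_iff _ _).1 hz with h | h
      · have hzR : RIn G D a z := (((hmemA u).1 hu).2.2).trans (RIn.of_support hw1 h)
        obtain ⟨hzs, hzS⟩ := (hDmem z).1 (hw1 z h)
        exact Finset.mem_coe.2 ((hmemA z).2 ⟨hzs, hzS, hzR⟩)
      · have hzR : RIn G D a z := RIn.of_support hw2 h
        obtain ⟨hzs, hzS⟩ := (hDmem z).1 (hw2 z h)
        exact Finset.mem_coe.2 ((hmemA z).2 ⟨hzs, hzS, hzR⟩)
    have hBconn : ∀ u, u ∈ B → ∀ v, v ∈ B →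
        ∃ w : G.Walk u v, ∀ z ∈ w.support, z ∈ (↑B : Set V) := by
      intro u hu v hv
      obtain ⟨w1, hw1⟩ := (((hmemB u).1 hu).2.2).symm
      obtain ⟨w2, hw2⟩ := ((hmemB v).1 hv).2.2
      refine ⟨w1.append w2, fun z hz => ?_⟩
      rcases (Walk.mem_support_append_iff _ _).1 hz with h | h
      · have hzR : RIn G D b z := (((hmemB u).1 hu).2.2).trans (RIn.of_support hw1 h)
        obtain ⟨hzs, hzS⟩ := (hDmem z).1 (hw1 z h)
        exact Finset.mem_coe.2 ((hmemB z).2 ⟨hzs, hzS, hzR⟩)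
      · have hzR : RIn G D b z := RIn.of_support hw2 h
        obtain ⟨hzs, hzS⟩ := (hDmem z).1 (hw2 z h)
        exact Finset.mem_coe.2 ((hmemB z).2 ⟨hzs, hzS, hzR⟩)
    -- S is a clique (chordality is used here)
    have hSclq : ∀ u ∈ S, ∀ v ∈ S, u ≠ v → G.Adj u v := by
      intro x hx y hy hxy
      by_contra hnxy
      obtain ⟨⟨ax, haxA, haxadj⟩, -⟩ := hnbr x hx
      obtain ⟨⟨ay, hayA, hayadj⟩, -⟩ := hnbr y hy
      obtain ⟨-, ⟨bX, hbXB, hbXadj⟩⟩ := hnbr x hx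
      obtain ⟨-, ⟨bY, hbYB, hbYadj⟩⟩ := hnbr y hy
      have hexP : ∃ w : G.Walk x y, ∀ z ∈ w.support, z ∈ (↑A : Set V) ∪ {x, y} := by
        obtain ⟨w1, hw1⟩ := hAconn ax haxA ay hayA
        refine ⟨Walk.cons haxadj (w1.concat hayadj.symm), fun z hz => ?_⟩
        have hz' : z = x ∨ z ∈ w1.support ∨ z = y := by
          simpa [Walk.support_cons, Walk.support_concat, List.concat_eq_append, or_assoc]
            using hz
        rcases hz' with rfl | hz' | rfl
        · exact Or.inr (by simp)
        · exact Or.inl (hw1 z hz')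
        · exact Or.inr (by simp)
      have hexQ : ∃ w : G.Walk y x, ∀ z ∈ w.support, z ∈ (↑B : Set V) ∪ {x, y} := by
        obtain ⟨w2, hw2⟩ := hBconn bY hbYB bX hbXB
        refine ⟨Walk.cons hbYadj (w2.concat hbXadj.symm), fun z hz => ?_⟩
        have hz' : z = y ∨ z ∈ w2.support ∨ z = x := by
          simpa [Walk.support_cons, Walk.support_concat, List.concat_eq_append, or_assoc]
            using hz
        rcases hz' with rfl | hz' | rfl
        · exact Or.inr (by simp)
        · exact Or.inl (hw2 z hz')
        · exact Or.inr (by simp)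
      obtain ⟨P, hPsub, hPpath, hPmin⟩ := exists_min_walk hexP
      obtain ⟨Q, hQsub, hQpath, hQmin⟩ := exists_min_walk hexQ
      have hP2 : 2 ≤ P.length := by
        rcases Nat.lt_or_ge P.length 2 with h2 | h2
        · have h01 : P.length = 0 ∨ P.length = 1 := by omega
          rcases h01 with h0 | h1
          · exact absurd (Walk.eq_of_length_eq_zero h0) hxy
          · exact absurd (P.adj_of_mem_edges (edge_of_length_one P h1)) hnxy
        · exact h2
      have hQ2 : 2 ≤ Q.length := by
        rcases Nat.lt_or_ge Q.length 2 with h2 | h2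
        · have h01 : Q.length = 0 ∨ Q.length = 1 := by omega
          rcases h01 with h0 | h1
          · exact absurd (Walk.eq_of_length_eq_zero h0) hxy.symm
          · exact absurd (Q.adj_of_mem_edges (edge_of_length_one Q h1)).symm hnxy
        · exact h2
      have hdisj : ∀ z, z ∈ P.support → z ∈ Q.support → z = x ∨ z = y := by
        intro z hzP hzQ
        rcases hPsub z hzP with hA' | hxy'
        · rcases hQsub z hzQ with hB' | hxy''
          · exact absurd (Finset.mem_coe.1 hB') (hAB z (Finset.mem_coe.1 hA'))
          · simpa using hxy''
        · simpa using hxy'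
      have hxP : x ∈ P.support := P.start_mem_support
      have hyP : y ∈ P.support := P.end_mem_support
      have hyQ : y ∈ Q.support := Q.start_mem_support
      have hxQ : x ∈ Q.support := Q.end_mem_support
      set C := P.append Q with hC
      have hCtrail : C.IsTrail := by
        rw [Walk.isTrail_def, hC, Walk.edges_append, List.nodup_append]
        refine ⟨hPpath.isTrail.edges_nodup, hQpath.isTrail.edges_nodup, ?_⟩
        intro e heP e' heQ he
        rw [← he] at heQ
        induction e using Sym2.ind with
        | _ c d =>
          have hcP := P.fst_mem_support_of_mem_edges heP
          have hdP := P.snd_mem_support_of_mem_edges heP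
          have hcQ := Q.fst_mem_support_of_mem_edges heQ
          have hdQ := Q.snd_mem_support_of_mem_edges heQ
          have hcd : G.Adj c d := P.adj_of_mem_edges heP
          rcases hdisj c hcP hcQ with rfl | rfl <;> rcases hdisj d hdP hdQ with rfl | rfl
          · exact hcd.ne rfl
          · exact hnxy hcd
          · exact hnxy hcd.symm
          · exact hcd.ne rfl
      have hCne : C ≠ Walk.nil := by
        intro h
        have hlen : C.length = 0 := by rw [h]; rfl
        rw [hC, Walk.length_append] at hlen
        omega
      have hCtail : C.support.tail.Nodup := by
        rw [hC, Walk.tail_support_append, List.nodup_append]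
        refine ⟨hPpath.support_nodup.tail, hQpath.support_nodup.tail, ?_⟩
        intro z hzP z' hzQ hzz
        rw [← hzz] at hzQ
        have hzP' : z ∈ P.support := List.mem_of_mem_tail hzP
        have hzQ' : z ∈ Q.support := List.mem_of_mem_tail hzQ
        rcases hdisj z hzP' hzQ' with rfl | rfl
        · have hnd := hPpath.support_nodup
          rw [P.support_eq_cons] at hnd
          exact (List.nodup_cons.1 hnd).1 hzP
        · have hnd := hQpath.support_nodup
          rw [Q.support_eq_cons] at hnd
          exact (List.nodup_cons.1 hnd).1 hzQ
      have hClen : 4 ≤ C.length := by rw [hC, Walk.length_append]; omega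
      obtain ⟨c, d, hc, hd, hcd, hce⟩ :=
        hG x C ((Walk.isCycle_def C).2 ⟨hCtrail, hCne, hCtail⟩) hClen
      have hcs : c ∈ P.support ∨ c ∈ Q.support := by
        rw [hC, Walk.mem_support_append_iff] at hc; exact hc
      have hds : d ∈ P.support ∨ d ∈ Q.support := by
        rw [hC, Walk.mem_support_append_iff] at hd; exact hd
      have hPC : ∀ e ∈ P.edges, e ∈ C.edges := by
        intro e he; rw [hC, Walk.edges_append]; exact List.mem_append_left _ he
      have hQC : ∀ e ∈ Q.edges, e ∈ C.edges := by
        intro e he; rw [hC, Walk.edges_append]; exact List.mem_append_right _ he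
      have hcross : ∀ c' d', G.Adj c' d' → c' ∈ P.support → c' ∉ Q.support →
          d' ∈ Q.support → d' ∉ P.support → False := by
        intro c' d' hcd' hcP hcQn hdQ hdPn
        have hcA : c' ∈ A := by
          rcases hPsub c' hcP with h | h
          · exact Finset.mem_coe.1 h
          · exfalso
            rcases (by simpa using h : c' = x ∨ c' = y) with rfl | rfl
            · exact hcQn hxQ
            · exact hcQn hyQ
        have hdB : d' ∈ B := by
          rcases hQsub d' hdQ with h | h
          · exact Finset.mem_coe.1 h
          · exfalso
            rcases (by simpa using h : d' = x ∨ d' = y) with rfl | rfl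
            · exact hdPn hxP
            · exact hdPn hyP
        exact hnoedge c' hcA d' hdB hcd'
      rcases hcs with hcP | hcQ <;> rcases hds with hdP | hdQ
      · exact hce (hPC _ (shortcut hPsub hPmin hcP hdP hcd))
      · by_cases hdP : d ∈ P.support
        · exact hce (hPC _ (shortcut hPsub hPmin hcP hdP hcd))
        · by_cases hcQ : c ∈ Q.support
          · exact hce (hQC _ (shortcut hQsub hQmin hcQ hdQ hcd))
          · exact (hcross c d hcd hcP hcQ hdQ hdP).elim
      · by_cases hcP : c ∈ P.support
        · exact hce (hPC _ (shortcut hPsub hPmin hcP hdP hcd))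
        · by_cases hdQ : d ∈ Q.support
          · exact hce (hQC _ (shortcut hQsub hQmin hcQ hdQ hcd))
          · exact (hcross d c hcd.symm hdP hdQ hcQ hcP).elim
      · exact hce (hQC _ (shortcut hQsub hQmin hcQ hdQ hcd))
    -- extracting a simplicial vertex from A (resp. B)
    have extract : ∀ (E : Finset V) (c : V), c ∈ E → E ⊆ s → (∀ x ∈ E, x ∉ S) →
        (∀ x, x ∈ E → ∀ z, z ∈ s → z ∉ S → G.Adj x z → z ∈ E) →
        (∃ m, m ∈ s ∧ m ∉ E ∧ m ∉ S) →
        ∃ u ∈ E, SimpIn G ↑s u := by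
      intro E c hcE hEs hES hclosed hm
      obtain ⟨m, hms, hmE, hmS⟩ := hm
      have hFs : E ∪ S ⊆ s := Finset.union_subset hEs hSs
      have hmF : m ∉ E ∪ S := by
        rw [Finset.mem_union]; rintro (h | h); exacts [hmE h, hmS h]
      have hcardF : (E ∪ S).card < n := by
        rw [← hcard]
        exact Finset.card_lt_card ⟨hFs, fun hsub => hmF (hsub hms)⟩
      have hkey := ih (E ∪ S).card hcardF (E ∪ S) rfl ⟨c, Finset.mem_union_left _ hcE⟩
      have hmemF : ∀ u, u ∈ E → ∀ x, x ∈ s → G.Adj u x → x ∈ E ∪ S := by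
        intro u hu x hx hadj
        by_cases hxS : x ∈ S
        · exact Finset.mem_union_right _ hxS
        · exact Finset.mem_union_left _ (hclosed u hu x hx hxS hadj)
      have lift : ∀ u, u ∈ E → SimpIn G ↑(E ∪ S) u → SimpIn G ↑s u := by
        intro u hu husimp x hx hax y hy hay hxy
        exact husimp (Finset.mem_coe.2 (hmemF u hu x (Finset.mem_coe.1 hx) hax)) hax
          (Finset.mem_coe.2 (hmemF u hu y (Finset.mem_coe.1 hy) hay)) hay hxy
      by_cases hFcomp : ∃ p ∈ E ∪ S, ∃ q ∈ E ∪ S, p ≠ q ∧ ¬ G.Adj p q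
      · obtain ⟨u, huF, v, hvF, hus, hvs, huv, hnuv⟩ := hkey.2 hFcomp
        have huv' : u ∈ E ∨ v ∈ E := by
          by_contra h
          push_neg at h
          have huS : u ∈ S := (Finset.mem_union.1 huF).resolve_left h.1
          have hvS : v ∈ S := (Finset.mem_union.1 hvF).resolve_left h.2
          exact hnuv (hSclq u huS v hvS huv)
        rcases huv' with hu | hv
        · exact ⟨u, hu, lift u hu hus⟩
        · exact ⟨v, hv, lift v hv hvs⟩
      · push_neg at hFcomp
        refine ⟨c, hcE, ?_⟩
        intro x hx hax y hy hay hxy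
        exact hFcomp x (hmemF c hcE x (Finset.mem_coe.1 hx) hax) y
          (hmemF c hcE y (Finset.mem_coe.1 hy) hay) hxy
    obtain ⟨u, huA, husimp⟩ := extract A a haA (fun x hx => ((hmemA x).1 hx).1)
      (fun x hx => ((hmemA x).1 hx).2.1) hclosedA ⟨b, hb, fun h => hAB b h hbB, hbS⟩
    obtain ⟨v, hvB, hvsimp⟩ := extract B b hbB (fun x hx => ((hmemB x).1 hx).1)
      (fun x hx => ((hmemB x).1 hx).2.1) hclosedB ⟨a, ha, hAB a haA, haS⟩
    have huv : u ≠ v := fun h => hAB u huA (h ▸ hvB)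
    have hnuv : ¬ G.Adj u v := hnoedge u huA v hvB
    have hus : u ∈ s := ((hmemA u).1 huA).1
    have hvs : v ∈ s := ((hmemB v).1 hvB).1
    exact ⟨⟨u, hus, husimp⟩, fun _ => ⟨u, hus, v, hvs, husimp, hvsimp, huv, hnuv⟩⟩

end ChordalAux

/-- In a chordal graph with at least one vertex: the first vertex of any
perfect elimination order is simplicial (its whole neighbourhood is complete),
and a simplicial vertex always exists. -/
theorem simplicial_vertex_exists {V : Type*} [Fintype V] (G : SimpleGraph V)
    (hG : IsChordal G) (hne : Nonempty V) :
    (∀ σ : Fin (Fintype.card V) ≃ V, IsPEO G σ →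
      G.IsClique (G.neighborSet (σ ⟨0, Fintype.card_pos⟩))) ∧
    ∃ v : V, G.IsClique (G.neighborSet v) := by
  classical
  constructor
  · intro σ hσ
    refine (hσ ⟨0, Fintype.card_pos⟩).subset ?_
    intro u hu
    have hadj : G.Adj (σ ⟨0, Fintype.card_pos⟩) u := hu
    refine ⟨hadj, σ.symm u, ?_, σ.apply_symm_apply u⟩
    rw [Fin.lt_def]
    refine Nat.pos_of_ne_zero fun h0 => ?_
    have : σ.symm u = ⟨0, Fintype.card_pos⟩ := Fin.ext h0
    have hu0 : u = σ ⟨0, Fintype.card_pos⟩ := by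
      rw [← this, σ.apply_symm_apply]
    exact hadj.ne' hu0
  · haveI := hne
    obtain ⟨⟨v, hv, hsimp⟩, -⟩ := ChordalAux.key G hG (Finset.univ.card) Finset.univ rfl
      Finset.univ_nonempty
    refine ⟨v, fun x hx y hy hxy => ?_⟩
    exact hsimp (Finset.mem_coe.2 (Finset.mem_univ x)) hx
      (Finset.mem_coe.2 (Finset.mem_univ y)) hy hxy
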